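/- Correctness of the unique-successor formula: let φ be a QCTL formula and p an atomic proposition not occurring in φ; then for every Kripke structure K and state x, K,x ⊨ EX φ ∧ ∀p.( AX(φ → p) ∨ AX(φ → ¬p) ) if and only if x has exactly one E-successor satisfying φ. -/

import Mathlib

open Classical

/-- Syntax of QCTL: `φ ::= q | ¬φ | φ∨ψ | EX φ | E φ U ψ | A φ U ψ | ∃p.φ`. -/
inductive QCTL (AP : Type) : Type where
  | atom : AP → QCTL AP
  | qneg : QCTL AP → QCTL AP
  | qor  : QCTL AP → QCTL AP → QCTL AP
  | qEX  : QCTL AP → QCTL AP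
  | qEU  : QCTL AP → QCTL AP → QCTL AP
  | qAU  : QCTL AP → QCTL AP → QCTL AP
  | qexi : AP → QCTL AP → QCTL AP

/-- A Kripke structure over atomic propositions `AP` with (finite) state space `V`:
a serial edge relation and a labelling function. -/
structure Kripke (AP V : Type) where
  E : V → V → Prop
  serial : ∀ v, ∃ w, E v w
  label : V → Set AP

variable {AP V : Type}

/-- `K'` agrees with `K` (same edges) except possibly on the labelling of `p`. -/
def Kripke.AgreeExcept (K K' : Kripke AP V) (p : AP) : Prop :=
  K'.E = K.E ∧ ∀ v q, q ≠ p → (q ∈ K'.label v ↔ q ∈ K.label v)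

/-- Structure semantics of QCTL. -/
def QCTL.sat : QCTL AP → Kripke AP V → V → Prop
  | .atom p, K, x => p ∈ K.label x
  | .qneg φ, K, x => ¬ φ.sat K x
  | .qor φ ψ, K, x => φ.sat K x ∨ ψ.sat K x
  | .qEX φ, K, x => ∃ y, K.E x y ∧ φ.sat K y
  | .qEU φ ψ, K, x => ∃ ρ : ℕ → V, ρ 0 = x ∧ (∀ i, K.E (ρ i) (ρ (i + 1))) ∧
      ∃ i, ψ.sat K (ρ i) ∧ ∀ j < i, φ.sat K (ρ j)
  | .qAU φ ψ, K, x => ∀ ρ : ℕ → V, ρ 0 = x → (∀ i, K.E (ρ i) (ρ (i + 1))) →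
      ∃ i, ψ.sat K (ρ i) ∧ ∀ j < i, φ.sat K (ρ j)
  | .qexi p φ, K, x => ∃ K' : Kripke AP V, K.AgreeExcept K' p ∧ φ.sat K' x

namespace QCTL

def qand (φ ψ : QCTL AP) : QCTL AP := qneg (qor (qneg φ) (qneg ψ))
def qimp (φ ψ : QCTL AP) : QCTL AP := qor (qneg φ) ψ
def qiff (φ ψ : QCTL AP) : QCTL AP := qand (qimp φ ψ) (qimp ψ φ)
def qtop [Inhabited AP] : QCTL AP := qor (atom default) (qneg (atom default))
def qbot [Inhabited AP] : QCTL AP := qneg qtop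
def qAX (φ : QCTL AP) : QCTL AP := qneg (qEX (qneg φ))
def qEF [Inhabited AP] (φ : QCTL AP) : QCTL AP := qEU qtop φ
def qAG [Inhabited AP] (φ : QCTL AP) : QCTL AP := qneg (qEF (qneg φ))
def qall (p : AP) (φ : QCTL AP) : QCTL AP := qneg (qexi p (qneg φ))

/-- All atomic propositions occurring in a formula (free or bound). -/
def atoms : QCTL AP → Set AP
  | atom p => {p}
  | qneg φ => φ.atoms
  | qor φ ψ => φ.atoms ∪ ψ.atoms
  | qEX φ => φ.atoms
  | qEU φ ψ => φ.atoms ∪ ψ.atoms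
  | qAU φ ψ => φ.atoms ∪ ψ.atoms
  | qexi p φ => insert p φ.atoms

/-- Size of a formula. -/
def qsize : QCTL AP → ℕ
  | atom _ => 1
  | qneg φ => φ.qsize + 1
  | qor φ ψ => φ.qsize + ψ.qsize + 1
  | qEX φ => φ.qsize + 1
  | qEU φ ψ => φ.qsize + ψ.qsize + 1
  | qAU φ ψ => φ.qsize + ψ.qsize + 1
  | qexi _ φ => φ.qsize + 1

end QCTL

/-- Equivalence of two QCTL formulas: same truth value at every state of every
(finite) Kripke structure. -/
def QEquiv (φ ψ : QCTL AP) : Prop :=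
  ∀ (V : Type) [Fintype V] (K : Kripke AP V) (x : V), φ.sat K x ↔ ψ.sat K x

lemma agree_symm {K K' : Kripke AP V} {p : AP} (h : K.AgreeExcept K' p) :
    K'.AgreeExcept K p :=
  ⟨h.1.symm, fun v q hq => (h.2 v q hq).symm⟩

/-- Relabel `p` in `K` according to set `S`. -/
def Kripke.relabel (K : Kripke AP V) (p : AP) (S : Set V) : Kripke AP V :=
  ⟨K.E, K.serial, fun v => {q | (q ≠ p ∧ q ∈ K.label v) ∨ (q = p ∧ v ∈ S)}⟩

lemma relabel_agree (K : Kripke AP V) (p : AP) (S : Set V) :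
    K.AgreeExcept (K.relabel p S) p := by
  refine ⟨rfl, fun v q hq => ?_⟩
  simp [Kripke.relabel, hq, Set.mem_setOf_eq]

lemma relabel_mem (K : Kripke AP V) (p : AP) (S : Set V) (v : V) :
    p ∈ (K.relabel p S).label v ↔ v ∈ S := by
  simp [Kripke.relabel, Set.mem_setOf_eq]

lemma sat_agree_mp (φ : QCTL AP) (p : AP) (hp : p ∉ φ.atoms) :
    ∀ (K K' : Kripke AP V) (x : V), K.AgreeExcept K' p → φ.sat K' x → φ.sat K x := by
  induction φ with
  | atom q =>
    intro K K' x h hs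
    have hq : q ≠ p := by
      simp only [QCTL.atoms, Set.mem_singleton_iff] at hp
      exact fun hqq => hp hqq.symm
    exact (h.2 x q hq).1 hs
  | qneg ψ ih =>
    intro K K' x h hs hc
    exact hs (ih hp K' K x (agree_symm h) hc)
  | qor ψ χ ih1 ih2 =>
    intro K K' x h hs
    have hp1 : p ∉ ψ.atoms := fun hc => hp (Or.inl hc)
    have hp2 : p ∉ χ.atoms := fun hc => hp (Or.inr hc)
    exact hs.imp (ih1 hp1 K K' x h) (ih2 hp2 K K' x h)
  | qEX ψ ih =>
    intro K K' x h hs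
    obtain ⟨y, hy, hsy⟩ := hs
    exact ⟨y, h.1 ▸ hy, ih hp K K' y h hsy⟩
  | qEU ψ χ ih1 ih2 =>
    intro K K' x h hs
    have hp1 : p ∉ ψ.atoms := fun hc => hp (Or.inl hc)
    have hp2 : p ∉ χ.atoms := fun hc => hp (Or.inr hc)
    obtain ⟨ρ, h0, hE, i, hi, hj⟩ := hs
    exact ⟨ρ, h0, fun i => h.1 ▸ hE i, i, ih2 hp2 K K' _ h hi,
      fun j hji => ih1 hp1 K K' _ h (hj j hji)⟩
  | qAU ψ χ ih1 ih2 =>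
    intro K K' x h hs
    have hp1 : p ∉ ψ.atoms := fun hc => hp (Or.inl hc)
    have hp2 : p ∉ χ.atoms := fun hc => hp (Or.inr hc)
    intro ρ h0 hE
    obtain ⟨i, hi, hj⟩ := hs ρ h0 (fun i => h.1.symm ▸ hE i)
    exact ⟨i, ih2 hp2 K K' _ h hi, fun j hji => ih1 hp1 K K' _ h (hj j hji)⟩
  | qexi q ψ ih =>
    intro K K' x h hs
    have hqp : p ≠ q := by
      intro hc; exact hp (by simp [QCTL.atoms, hc])
    have hp' : p ∉ ψ.atoms := fun hc => hp (by simp [QCTL.atoms, hc])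
    obtain ⟨K'', hK'', hsat⟩ := hs
    refine ⟨K''.relabel p {v | p ∈ K.label v}, ?_, ?_⟩
    · constructor
      · show (K''.relabel p _).E = K.E
        have : K''.E = K.E := hK''.1.trans h.1
        simpa [Kripke.relabel] using this
      · intro v r hrq
        by_cases hrp : r = p
        · rw [hrp]
          exact relabel_mem K'' p {v | p ∈ K.label v} v
        · rw [(relabel_agree K'' p _).2 v r hrp, hK''.2 v r hrq, h.2 v r hrp]
    · exact ih hp' _ K'' x (agree_symm (relabel_agree K'' p _)) hsat

lemma sat_agree (φ : QCTL AP) (p : AP) (hp : p ∉ φ.atoms)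
    (K K' : Kripke AP V) (x : V) (h : K.AgreeExcept K' p) :
    φ.sat K' x ↔ φ.sat K x :=
  ⟨sat_agree_mp φ p hp K K' x h, sat_agree_mp φ p hp K' K x (agree_symm h)⟩

lemma sat_qand (φ ψ : QCTL AP) (K : Kripke AP V) (x : V) :
    (QCTL.qand φ ψ).sat K x ↔ φ.sat K x ∧ ψ.sat K x := by
  simp [QCTL.qand, QCTL.sat, not_or, not_not]

lemma sat_qall (p : AP) (φ : QCTL AP) (K : Kripke AP V) (x : V) :
    (QCTL.qall p φ).sat K x ↔ ∀ K', K.AgreeExcept K' p → φ.sat K' x := by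
  simp [QCTL.qall, QCTL.sat, not_exists, not_and, not_not]

lemma sat_qAX (φ : QCTL AP) (K : Kripke AP V) (x : V) :
    (QCTL.qAX φ).sat K x ↔ ∀ y, K.E x y → φ.sat K y := by
  simp [QCTL.qAX, QCTL.sat, not_exists, not_and, not_not]

lemma sat_qimp (φ ψ : QCTL AP) (K : Kripke AP V) (x : V) :
    (QCTL.qimp φ ψ).sat K x ↔ (φ.sat K x → ψ.sat K x) := by
  simp only [QCTL.qimp, QCTL.sat]
  tauto

/-- Correctness of the unique-successor formula
`E_{=1}X(φ) := EX φ ∧ ∀p.( AX(φ→p) ∨ AX(φ→¬p) )` (for `p` not occurring in `φ`):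
it holds at `x` iff `x` has exactly one `E`-successor satisfying `φ`. -/
theorem uniqueX_correct {AP V : Type} [Fintype V]
    (K : Kripke AP V) (x : V) (φ : QCTL AP) (p : AP) (hp : p ∉ φ.atoms) :
    (QCTL.qand (QCTL.qEX φ)
      (QCTL.qall p
        (QCTL.qor (QCTL.qAX (QCTL.qimp φ (QCTL.atom p)))
                  (QCTL.qAX (QCTL.qimp φ (QCTL.qneg (QCTL.atom p))))))).sat K x ↔
      (∃! y : V, K.E x y ∧ φ.sat K y) := by
  rw [sat_qand, sat_qall]
  simp only [QCTL.sat, sat_qAX, sat_qimp]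
  constructor
  · rintro ⟨⟨y, hxy, hy⟩, hall⟩
    refine ⟨y, ⟨hxy, hy⟩, ?_⟩
    rintro z ⟨hxz, hz⟩
    by_contra hne
    have hag := relabel_agree K p {y}
    set K' := K.relabel p {y} with hK'
    have hE' : K'.E = K.E := hag.1
    rcases hall K' hag with h1 | h2
    · replace h1 := fun z hz => imp_iff_not_or.mp (h1 z hz)
      rcases h1 z (hE' ▸ hxz) with hc | hmem
      · exact hc ((sat_agree φ p hp K K' z hag).mpr hz)
      · rw [hK', relabel_mem] at hmem
        exact hne hmem
    · replace h2 := fun z hz => imp_iff_not_or.mp (h2 z hz)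
      rcases h2 y (hE' ▸ hxy) with hc | hmem
      · exact hc ((sat_agree φ p hp K K' y hag).mpr hy)
      · rw [hK', relabel_mem] at hmem
        exact hmem rfl
  · rintro ⟨y, ⟨hxy, hy⟩, huniq⟩
    refine ⟨⟨y, hxy, hy⟩, ?_⟩
    intro K' hag
    have hE' : K'.E = K.E := hag.1
    by_cases hpy : p ∈ K'.label y
    · left
      refine (fun h z hz => imp_iff_not_or.mpr (h z hz)) (?_ : ∀ z, K'.E x z → ¬φ.sat K' z ∨ p ∈ K'.label z)
      intro z hz
      by_cases hφz : φ.sat K' z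
      · have hzy : z = y :=
          huniq z ⟨hE' ▸ hz, (sat_agree φ p hp K K' z hag).mp hφz⟩
        exact Or.inr (hzy ▸ hpy)
      · exact Or.inl hφz
    · right
      refine (fun h z hz => imp_iff_not_or.mpr (h z hz)) (?_ : ∀ z, K'.E x z → ¬φ.sat K' z ∨ p ∉ K'.label z)
      intro z hz
      by_cases hφz : φ.sat K' z
      · have hzy : z = y :=
          huniq z ⟨hE' ▸ hz, (sat_agree φ p hp K K' z hag).mp hφz⟩
        exact Or.inr (hzy ▸ hpy)
      · exact Or.inl hφz
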